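/- If for every d ≥ 1 and all nonnegative integers k₁,...,k_d the joint factorial moments satisfy E[Π_{i=1}^d (X[n,i])_{k_i}] → 1 as n → ∞, and the X[n,i] are nonnegative integer-valued random variables, then (X[n,1],...,X[n,d]) converges in distribution to a vector of d independent Poisson random variables with mean 1, for each fixed d. -/

import Mathlib

open MeasureTheory Filter

lemma altsum (y : ℕ) : ∀ T : ℕ, ∑ t ∈ Finset.range (T+1), ((-1:ℝ)^t * (Nat.choose (y+1) t : ℝ))
    = (-1)^T * (Nat.choose y T : ℝ)
  | 0 => by simp
  | (T+1) => by
    rw [Finset.sum_range_succ, altsum y T, Nat.choose_succ_succ (y) T]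
    push_cast
    ring

lemma choose_mul' {x m : ℕ} (hmx : m ≤ x) (j : ℕ) (hmj : m ≤ j) :
    Nat.choose x j * Nat.choose j m = Nat.choose x m * Nat.choose (x - m) (j - m) := by
  rcases le_or_gt j x with h | h
  · exact Nat.choose_mul hmj
  · have h2 : x - m < j - m := by omega
    rw [Nat.choose_eq_zero_of_lt h, Nat.choose_eq_zero_of_lt h2, zero_mul, mul_zero]

lemma stepA (x m J : ℕ) (hmJ : m ≤ J) :
    |(if x = m then (1:ℝ) else 0) -
        ∑ j ∈ Finset.Icc m J, (-1:ℝ)^(j-m) * (Nat.choose j m : ℝ) * (Nat.choose x j : ℝ)|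
      ≤ (Nat.choose (J+1) m : ℝ) * (Nat.choose x (J+1) : ℝ) := by
  rcases lt_or_ge x m with hxm | hmx
  · have : ∀ j ∈ Finset.Icc m J, (-1:ℝ)^(j-m) * (Nat.choose j m : ℝ) * (Nat.choose x j : ℝ) = 0 := by
      intro j hj
      rw [Nat.choose_eq_zero_of_lt (lt_of_lt_of_le hxm (Finset.mem_Icc.1 hj).1)]
      simp
    rw [Finset.sum_eq_zero this, if_neg (by omega)]
    simp only [sub_zero, abs_zero]
    positivity
  · have hsum : ∑ j ∈ Finset.Icc m J, (-1:ℝ)^(j-m) * (Nat.choose j m : ℝ) * (Nat.choose x j : ℝ)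
        = (Nat.choose x m : ℝ) * ∑ t ∈ Finset.range (J - m + 1),
            (-1:ℝ)^t * (Nat.choose (x - m) t : ℝ) := by
      rw [Finset.mul_sum, ← Finset.Ico_add_one_right_eq_Icc, Finset.sum_Ico_eq_sum_range]
      have h1 : J + 1 - m = J - m + 1 := by omega
      rw [h1]
      refine Finset.sum_congr rfl fun t _ => ?_
      have hc : (Nat.choose x (m + t) : ℝ) * (Nat.choose (m + t) m : ℝ)
          = (Nat.choose x m : ℝ) * (Nat.choose (x - m) t : ℝ) := by
        rw [← Nat.cast_mul, ← Nat.cast_mul, choose_mul' hmx (m + t) (by omega)]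
        simp
      have h2 : m + t - m = t := by omega
      rw [h2]
      linear_combination ((-1:ℝ)^t) * hc
    rw [hsum]
    rcases eq_or_lt_of_le hmx with heq | hlt
    · -- x = m
      rw [if_pos heq.symm, ← heq, Nat.sub_self]
      have : ∑ t ∈ Finset.range (J - m + 1), (-1:ℝ)^t * (Nat.choose 0 t : ℝ) = 1 := by
        rw [Finset.sum_eq_single 0]
        · simp
        · intro t _ ht
          rw [Nat.choose_eq_zero_of_lt (by omega)]
          simp
        · simp
      rw [this]
      simp only [Nat.choose_self, Nat.cast_one, mul_one, sub_self, abs_zero]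
      positivity
    · -- m < x
      rw [if_neg (by omega)]
      obtain ⟨y, hy⟩ : ∃ y, x - m = y + 1 := ⟨x - m - 1, by omega⟩
      rw [hy, altsum y (J - m)]
      rw [zero_sub, abs_neg, abs_mul, abs_mul, abs_pow, abs_neg, abs_one, one_pow, one_mul,
        Nat.abs_cast, Nat.abs_cast]
      -- goal: (C x m) * (C y (J-m)) ≤ C (J+1) m * C x (J+1)
      rw [← Nat.cast_mul, ← Nat.cast_mul]
      have key : Nat.choose x m * Nat.choose y (J - m) ≤ Nat.choose (J+1) m * Nat.choose x (J+1) := by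
        have hpas : Nat.choose y (J - m) ≤ Nat.choose (y+1) (J - m + 1) := by
          rw [Nat.choose_succ_succ]
          omega
        have h3 : Nat.choose x (J+1) * Nat.choose (J+1) m
            = Nat.choose x m * Nat.choose (x - m) (J + 1 - m) := choose_mul' hmx (J+1) (by omega)
        have h4 : x - m = y + 1 := hy
        have h5 : J + 1 - m = J - m + 1 := by omega
        rw [h4, h5] at h3
        calc Nat.choose x m * Nat.choose y (J - m)
            ≤ Nat.choose x m * Nat.choose (y+1) (J - m + 1) :=
              Nat.mul_le_mul_left _ hpas
          _ = Nat.choose (J+1) m * Nat.choose x (J+1) := by rw [← h3]; ring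
      exact_mod_cast key

lemma prod_diff {ι : Type*} [DecidableEq ι] (s : Finset ι) (a b g h : ι → ℝ)
    (hag : ∀ i ∈ s, |a i| ≤ g i) (hbg : ∀ i ∈ s, |b i| ≤ g i)
    (hab : ∀ i ∈ s, |a i - b i| ≤ h i) (hh : ∀ i ∈ s, 0 ≤ h i) :
    |∏ i ∈ s, a i - ∏ i ∈ s, b i| ≤ ∑ i ∈ s, h i * ∏ j ∈ s.erase i, g j := by
  induction s using Finset.cons_induction with
  | empty => simp
  | cons x s hx ih =>
    have hmem : ∀ i ∈ s, i ∈ Finset.cons x s hx := fun i hi => Finset.mem_cons_of_mem hi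
    have hxmem : x ∈ Finset.cons x s hx := Finset.mem_cons_self x s
    have hg0 : ∀ i ∈ s, 0 ≤ g i := fun i hi => (abs_nonneg _).trans (hag i (hmem i hi))
    have hgx0 : 0 ≤ g x := (abs_nonneg _).trans (hag x hxmem)
    have ihs := ih (fun i hi => hag i (hmem i hi)) (fun i hi => hbg i (hmem i hi))
      (fun i hi => hab i (hmem i hi)) (fun i hi => hh i (hmem i hi))
    rw [Finset.prod_cons, Finset.prod_cons]
    have step1 : |a x * ∏ i ∈ s, a i - b x * ∏ i ∈ s, b i|
        ≤ |a x| * |∏ i ∈ s, a i - ∏ i ∈ s, b i| + |a x - b x| * |∏ i ∈ s, b i| := by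
      have heq : a x * ∏ i ∈ s, a i - b x * ∏ i ∈ s, b i
          = a x * (∏ i ∈ s, a i - ∏ i ∈ s, b i) + (a x - b x) * ∏ i ∈ s, b i := by ring
      rw [heq]
      exact (abs_add_le _ _).trans (by rw [abs_mul, abs_mul])
    have hprodb : |∏ i ∈ s, b i| ≤ ∏ i ∈ s, g i := by
      rw [Finset.abs_prod]
      exact Finset.prod_le_prod (fun i _ => abs_nonneg _) (fun i hi => hbg i (hmem i hi))
    have step2 : |a x| * |∏ i ∈ s, a i - ∏ i ∈ s, b i| + |a x - b x| * |∏ i ∈ s, b i|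
        ≤ g x * (∑ i ∈ s, h i * ∏ j ∈ s.erase i, g j) + h x * ∏ i ∈ s, g i := by
      have t1 : |a x| * |∏ i ∈ s, a i - ∏ i ∈ s, b i| ≤ g x * (∑ i ∈ s, h i * ∏ j ∈ s.erase i, g j) :=
        mul_le_mul (hag x hxmem) ihs (abs_nonneg _) hgx0
      have t2 : |a x - b x| * |∏ i ∈ s, b i| ≤ h x * ∏ i ∈ s, g i :=
        mul_le_mul (hab x hxmem) hprodb (abs_nonneg _) (hh x hxmem)
      linarith
    refine (step1.trans step2).trans (le_of_eq ?_)
    rw [Finset.sum_cons, Finset.erase_cons]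
    rw [Finset.mul_sum, add_comm]
    congr 1
    refine Finset.sum_congr rfl fun i hi => ?_
    have : (Finset.cons x s hx).erase i = Finset.cons x (s.erase i) (by simp [hx, Finset.mem_erase]) := by
      ext j
      simp only [Finset.mem_erase, Finset.mem_cons]
      constructor
      · rintro ⟨hji, hj | hj⟩
        · exact Or.inl hj
        · exact Or.inr ⟨hji, hj⟩
      · rintro (hj | ⟨hji, hj⟩)
        · subst hj; exact ⟨fun hh' => hx (hh' ▸ hi), Or.inl rfl⟩
        · exact ⟨hji, Or.inr hj⟩
    rw [this, Finset.prod_cons]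
    ring

lemma master {Ω : Type*} [MeasurableSpace Ω] (μ : Measure Ω) [IsProbabilityMeasure μ]
    (X : ℕ → ℕ → Ω → ℕ) (hmeas : ∀ n i, Measurable (X n i)) (d : ℕ)
    (hb : ∀ k : ℕ → ℕ, Tendsto
      (fun n => ∫ ω, ∏ i ∈ Finset.Icc 1 d, ((X n i ω).choose (k i) : ℝ) ∂μ)
      atTop (nhds (∏ i ∈ Finset.Icc 1 d, (((k i).factorial : ℝ))⁻¹)))
    {α : Type*} (P : Finset α) (c : α → ℝ) (K : α → ℕ → ℕ) :
    (∀ᶠ n in atTop,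
      Integrable (fun ω => ∑ p ∈ P, c p * ∏ i ∈ Finset.Icc 1 d, ((X n i ω).choose (K p i) : ℝ)) μ
      ∧ ∫ ω, (∑ p ∈ P, c p * ∏ i ∈ Finset.Icc 1 d, ((X n i ω).choose (K p i) : ℝ)) ∂μ
        = ∑ p ∈ P, c p * ∫ ω, ∏ i ∈ Finset.Icc 1 d, ((X n i ω).choose (K p i) : ℝ) ∂μ)
    ∧ Tendsto (fun n => ∫ ω, ∑ p ∈ P, c p * ∏ i ∈ Finset.Icc 1 d, ((X n i ω).choose (K p i) : ℝ) ∂μ)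
        atTop (nhds (∑ p ∈ P, c p * ∏ i ∈ Finset.Icc 1 d, (((K p i).factorial : ℝ))⁻¹)) := by
  have hint : ∀ k : ℕ → ℕ, ∀ᶠ n in atTop,
      Integrable (fun ω => ∏ i ∈ Finset.Icc 1 d, ((X n i ω).choose (k i) : ℝ)) μ := by
    intro k
    set L : ℝ := ∏ i ∈ Finset.Icc 1 d, (((k i).factorial : ℝ))⁻¹ with hL
    have hLpos : 0 < L := Finset.prod_pos fun i _ => by positivity
    have hev : ∀ᶠ n in atTop,
        L/2 < ∫ ω, ∏ i ∈ Finset.Icc 1 d, ((X n i ω).choose (k i) : ℝ) ∂μ :=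
      (hb k).eventually (eventually_gt_nhds (by linarith))
    filter_upwards [hev] with n hn
    by_contra hnot
    rw [integral_undef hnot] at hn
    linarith
  have hall : ∀ᶠ n in atTop, ∀ p ∈ P,
      Integrable (fun ω => ∏ i ∈ Finset.Icc 1 d, ((X n i ω).choose (K p i) : ℝ)) μ :=
    (Finset.eventually_all P).2 fun p _ => hint (K p)
  have key : ∀ᶠ n in atTop,
      Integrable (fun ω => ∑ p ∈ P, c p * ∏ i ∈ Finset.Icc 1 d, ((X n i ω).choose (K p i) : ℝ)) μ
      ∧ ∫ ω, (∑ p ∈ P, c p * ∏ i ∈ Finset.Icc 1 d, ((X n i ω).choose (K p i) : ℝ)) ∂μ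
        = ∑ p ∈ P, c p * ∫ ω, ∏ i ∈ Finset.Icc 1 d, ((X n i ω).choose (K p i) : ℝ) ∂μ := by
    filter_upwards [hall] with n hn
    have hintp : ∀ p ∈ P, Integrable
        (fun ω => c p * ∏ i ∈ Finset.Icc 1 d, ((X n i ω).choose (K p i) : ℝ)) μ :=
      fun p hp => (hn p hp).const_mul (c p)
    refine ⟨integrable_finset_sum P hintp, ?_⟩
    rw [integral_finset_sum P hintp]
    exact Finset.sum_congr rfl fun p _ => integral_const_mul _ _
  refine ⟨key, ?_⟩
  have hlim : Tendsto
      (fun n => ∑ p ∈ P, c p * ∫ ω, ∏ i ∈ Finset.Icc 1 d, ((X n i ω).choose (K p i) : ℝ) ∂μ)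
      atTop (nhds (∑ p ∈ P, c p * ∏ i ∈ Finset.Icc 1 d, (((K p i).factorial : ℝ))⁻¹)) :=
    tendsto_finset_sum P fun p _ => (hb (K p)).const_mul (c p)
  exact hlim.congr' (by filter_upwards [key] with n hn using hn.2.symm)

lemma qlim (m : ℕ) : Tendsto (fun J => ∑ j ∈ Finset.Icc m J,
      (-1:ℝ)^(j-m) * (Nat.choose j m : ℝ) * ((j.factorial : ℝ))⁻¹)
    atTop (nhds (Real.exp (-1) / (m.factorial : ℝ))) := by
  have hexp : HasSum (fun t : ℕ => (-1:ℝ)^t / (t.factorial : ℝ)) (Real.exp (-1)) := by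
    rw [Real.exp_eq_exp_ℝ]
    exact NormedSpace.expSeries_div_hasSum_exp (-1)
  have h1 : Tendsto (fun N : ℕ => ∑ t ∈ Finset.range N, (-1:ℝ)^t / (t.factorial : ℝ))
      atTop (nhds (Real.exp (-1))) := hexp.tendsto_sum_nat
  have h2 : Tendsto (fun J : ℕ => J - m + 1) atTop atTop :=
    (tendsto_add_atTop_nat 1).comp (tendsto_sub_atTop_nat m)
  have h3 : Tendsto (fun J : ℕ => ((m.factorial : ℝ))⁻¹ *
      ∑ t ∈ Finset.range (J - m + 1), (-1:ℝ)^t / (t.factorial : ℝ))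
      atTop (nhds (((m.factorial : ℝ))⁻¹ * Real.exp (-1))) :=
    ((h1.comp h2).const_mul _)
  have heq : ∀ᶠ J in atTop, ((m.factorial : ℝ))⁻¹ *
      ∑ t ∈ Finset.range (J - m + 1), (-1:ℝ)^t / (t.factorial : ℝ)
      = ∑ j ∈ Finset.Icc m J, (-1:ℝ)^(j-m) * (Nat.choose j m : ℝ) * ((j.factorial : ℝ))⁻¹ := by
    filter_upwards [eventually_ge_atTop m] with J hJ
    rw [Finset.mul_sum, ← Finset.Ico_add_one_right_eq_Icc, Finset.sum_Ico_eq_sum_range]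
    have h5 : J + 1 - m = J - m + 1 := by omega
    rw [h5]
    refine Finset.sum_congr rfl fun t _ => ?_
    have hfac : (Nat.choose (m+t) m) * m.factorial * t.factorial = (m+t).factorial := by
      have := Nat.choose_mul_factorial_mul_factorial (Nat.le_add_right m t)
      rwa [Nat.add_sub_cancel_left] at this
    have hfacR : ((Nat.choose (m+t) m : ℝ)) * (m.factorial : ℝ) * (t.factorial : ℝ)
        = ((m+t).factorial : ℝ) := by exact_mod_cast congrArg (Nat.cast : ℕ → ℝ) hfac
    have h6 : m + t - m = t := by omega
    rw [h6]
    have hm0 : (m.factorial : ℝ) ≠ 0 := Nat.cast_ne_zero.2 m.factorial_ne_zero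
    have ht0 : (t.factorial : ℝ) ≠ 0 := Nat.cast_ne_zero.2 t.factorial_ne_zero
    have hmt0 : (((m+t).factorial : ℝ)) ≠ 0 := Nat.cast_ne_zero.2 (m+t).factorial_ne_zero
    rw [div_eq_mul_inv]
    rw [show ((m+t).factorial : ℝ) = ((Nat.choose (m+t) m : ℝ)) * (m.factorial : ℝ) * (t.factorial : ℝ) from hfacR.symm]
    have hc0 : ((Nat.choose (m+t) m : ℝ)) ≠ 0 :=
      Nat.cast_ne_zero.2 (Nat.choose_pos (Nat.le_add_right m t)).ne'
    field_simp
  have h4 : ((m.factorial:ℝ))⁻¹ * Real.exp (-1) = Real.exp (-1) / (m.factorial : ℝ) := by ring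
  rw [← h4]
  exact h3.congr' heq

def Kext (I : Finset ℕ) (p : ↥I → ℕ) : ℕ → ℕ := fun a => if h : a ∈ I then p ⟨a, h⟩ else 0

lemma expandT (I : Finset ℕ) (J : ℕ) (m : ℕ → ℕ) (B : ℕ → ℕ → ℝ) :
    ∏ i ∈ I, (∑ j ∈ Finset.Icc (m i) J, ((-1:ℝ)^(j - m i) * (Nat.choose j (m i) : ℝ)) * B i j)
    = ∑ p ∈ Fintype.piFinset (fun i : ↥I => Finset.Icc (m ↑i) J),
        (∏ i : ↥I, ((-1:ℝ)^(p i - m ↑i) * (Nat.choose (p i) (m ↑i) : ℝ))) *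
        ∏ i ∈ I, B i (Kext I p i) := by
  classical
  rw [← Finset.prod_coe_sort I]
  rw [Finset.prod_univ_sum]
  refine Finset.sum_congr rfl fun p hp => ?_
  rw [← Finset.prod_coe_sort I (fun i => B i (Kext I p i)), ← Finset.prod_mul_distrib]
  refine Finset.prod_congr rfl fun i _ => ?_
  have : Kext I p ↑i = p i := by
    simp [Kext]
  rw [this]

def KG (J : ℕ) (q : (_ : ℕ) × Finset ℕ) : ℕ → ℕ := fun a => if a ∈ insert q.1 q.2 then J+1 else 0

lemma expandG (I : Finset ℕ) (J : ℕ) (c : ℕ → ℝ) (B : ℕ → ℕ → ℝ)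
    (hB1 : ∀ l ∈ I, B l 0 = 1) :
    ∑ i ∈ I, (c i * B i (J+1)) * ∏ j ∈ I.erase i, (1 + c j * B j (J+1))
    = ∑ q ∈ I.sigma (fun i => (I.erase i).powerset),
        (c q.1 * ∏ j ∈ q.2, c j) * ∏ l ∈ I, B l (KG J q l) := by
  classical
  rw [Finset.sum_sigma]
  refine Finset.sum_congr rfl fun i hi => ?_
  have hprod : ∏ j ∈ I.erase i, (1 + c j * B j (J+1))
      = ∑ t ∈ (I.erase i).powerset, ∏ j ∈ t, (c j * B j (J+1)) := by
    have : ∀ j, (1 + c j * B j (J+1)) = (c j * B j (J+1)) + 1 := fun j => by ring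
    simp_rw [this]
    rw [Finset.prod_add]
    exact Finset.sum_congr rfl fun t _ => by rw [Finset.prod_const_one, mul_one]
  rw [hprod, Finset.mul_sum]
  refine Finset.sum_congr rfl fun t ht => ?_
  have hti : i ∉ t := fun hit => (Finset.mem_erase.1 (Finset.mem_powerset.1 ht hit)).1 rfl
  have htI : t ⊆ I := (Finset.mem_powerset.1 ht).trans (Finset.erase_subset i I)
  have hsub : insert i t ⊆ I := Finset.insert_subset hi htI
  have hBprod : ∏ l ∈ I, B l (KG J ⟨i, t⟩ l) = B i (J+1) * ∏ j ∈ t, B j (J+1) := by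
    have h2 : B i (J+1) * ∏ j ∈ t, B j (J+1)
        = ∏ l ∈ insert i t, B l (J+1) := (Finset.prod_insert (f := fun l => B l (J+1)) hti).symm
    have h1 : ∏ l ∈ insert i t, B l (J+1) = ∏ l ∈ insert i t, B l (KG J ⟨i, t⟩ l) :=
      Finset.prod_congr rfl fun l hl => by rw [KG, if_pos hl]
    rw [h2, h1]
    refine (Finset.prod_subset hsub fun l hlI hl => ?_).symm
    rw [KG]
    simp only [if_neg hl]
    exact hB1 l hlI
  rw [hBprod, Finset.prod_mul_distrib]
  ring



lemma assemble {P : ℕ → ℝ} {A G : ℕ → ℕ → ℝ} {α β : ℕ → ℝ} {L : ℝ}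
    (hbound : ∀ᶠ J in atTop, ∀ᶠ n in atTop, |P n - A J n| ≤ G J n)
    (hA : ∀ J, Tendsto (A J) atTop (nhds (α J)))
    (hG : ∀ J, Tendsto (G J) atTop (nhds (β J)))
    (hα : Tendsto α atTop (nhds L)) (hβ : Tendsto β atTop (nhds 0)) :
    Tendsto P atTop (nhds L) := by
  rw [Metric.tendsto_atTop]
  intro ε hε
  obtain ⟨N1, h1⟩ := Metric.tendsto_atTop.1 hα (ε/3) (by linarith)
  obtain ⟨N2, h2⟩ := Metric.tendsto_atTop.1 hβ (ε/6) (by linarith)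
  obtain ⟨N0, h0⟩ := eventually_atTop.1 hbound
  set J := max (max N0 N1) N2 with hJ
  have hb0 : ∀ᶠ n in atTop, |P n - A J n| ≤ G J n := h0 J (le_max_of_le_left (le_max_left _ _))
  have hb1 : dist (α J) L < ε/3 := h1 J (le_max_of_le_left (le_max_right _ _))
  have hb2 : dist (β J) 0 < ε/6 := h2 J (le_max_right _ _)
  obtain ⟨N3, h3⟩ := Metric.tendsto_atTop.1 (hA J) (ε/3) (by linarith)
  obtain ⟨N4, h4⟩ := Metric.tendsto_atTop.1 (hG J) (ε/6) (by linarith)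
  obtain ⟨N5, h5⟩ := eventually_atTop.1 hb0
  refine ⟨max (max N3 N4) N5, fun n hn => ?_⟩
  have e3 := h3 n (le_trans (le_max_of_le_left (le_max_left _ _)) hn)
  have e4 := h4 n (le_trans (le_max_of_le_left (le_max_right _ _)) hn)
  have e5 := h5 n (le_trans (le_max_right _ _) hn)
  rw [Real.dist_eq] at e3 e4 hb1 hb2 ⊢
  rw [sub_zero] at hb2
  have t1 : |P n - L| ≤ |P n - A J n| + |A J n - L| := abs_sub_le _ _ _
  have t2 : |A J n - L| ≤ |A J n - α J| + |α J - L| := abs_sub_le _ _ _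
  have t3 : G J n ≤ |G J n - β J| + |β J| := by
    have u1 := le_abs_self (G J n - β J)
    have u2 := le_abs_self (β J)
    linarith
  linarith

lemma binMoments {Ω : Type*} [MeasurableSpace Ω]
    (μ : Measure Ω) [IsProbabilityMeasure μ]
    (X : ℕ → ℕ → Ω → ℕ)
    (hmom : ∀ d : ℕ, 1 ≤ d → ∀ k : ℕ → ℕ,
      Tendsto (fun n : ℕ =>
          ∫ ω, ∏ i ∈ Finset.Icc 1 d,
            (descPochhammer ℝ (k i)).eval ((X n i ω : ℕ) : ℝ) ∂μ)
        atTop (nhds 1)) (d : ℕ) (hd : 1 ≤ d) :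
    ∀ k : ℕ → ℕ, Tendsto
      (fun n => ∫ ω, ∏ i ∈ Finset.Icc 1 d, ((X n i ω).choose (k i) : ℝ) ∂μ)
      atTop (nhds (∏ i ∈ Finset.Icc 1 d, (((k i).factorial : ℝ))⁻¹)) := by
  intro k
  have hptw : ∀ n ω, ∏ i ∈ Finset.Icc 1 d, (descPochhammer ℝ (k i)).eval ((X n i ω : ℕ) : ℝ)
      = (∏ i ∈ Finset.Icc 1 d, ((k i).factorial : ℝ)) *
        ∏ i ∈ Finset.Icc 1 d, ((X n i ω).choose (k i) : ℝ) := by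
    intro n ω
    rw [← Finset.prod_mul_distrib]
    refine Finset.prod_congr rfl fun i _ => ?_
    rw [descPochhammer_eval_eq_descFactorial ℝ (X n i ω) (k i),
      Nat.descFactorial_eq_factorial_mul_choose]
    push_cast
    ring
  have hC : (0:ℝ) < ∏ i ∈ Finset.Icc 1 d, ((k i).factorial : ℝ) :=
    Finset.prod_pos fun i _ => by positivity
  set C : ℝ := ∏ i ∈ Finset.Icc 1 d, ((k i).factorial : ℝ) with hCdef
  have h1 : Tendsto (fun n : ℕ => C * ∫ ω, ∏ i ∈ Finset.Icc 1 d, ((X n i ω).choose (k i) : ℝ) ∂μ)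
      atTop (nhds 1) := by
    refine (hmom d hd k).congr fun n => ?_
    rw [← integral_const_mul]
    exact integral_congr_ae (Filter.Eventually.of_forall fun ω => hptw n ω)
  have h2 := h1.const_mul C⁻¹
  rw [mul_one] at h2
  have h3 : (fun n : ℕ => C⁻¹ * (C * ∫ ω, ∏ i ∈ Finset.Icc 1 d, ((X n i ω).choose (k i) : ℝ) ∂μ))
      = fun n : ℕ => ∫ ω, ∏ i ∈ Finset.Icc 1 d, ((X n i ω).choose (k i) : ℝ) ∂μ := by
    funext n
    field_simp
  rw [h3] at h2
  have h4 : C⁻¹ = ∏ i ∈ Finset.Icc 1 d, (((k i).factorial : ℝ))⁻¹ := by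
    rw [hCdef, ← Finset.prod_inv_distrib]
  rwa [h4] at h2

lemma czero (m : ℕ) : Tendsto (fun J : ℕ => (Nat.choose (J+1) m : ℝ) * (((J+1).factorial : ℝ))⁻¹)
    atTop (nhds 0) := by
  have hfact : Tendsto Nat.factorial atTop atTop :=
    tendsto_atTop_mono Nat.self_le_factorial tendsto_id
  have hJm : Tendsto (fun J : ℕ => J + 1 - m) atTop atTop :=
    (tendsto_sub_atTop_nat m).comp (tendsto_add_atTop_nat 1)
  have h1 : Tendsto (fun J : ℕ => (((J + 1 - m).factorial : ℕ) : ℝ)) atTop atTop :=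
    tendsto_natCast_atTop_atTop.comp (hfact.comp hJm)
  have h2 : Tendsto (fun J : ℕ => ((((J + 1 - m).factorial : ℕ) : ℝ))⁻¹) atTop (nhds 0) :=
    h1.inv_tendsto_atTop
  have h3 := h2.const_mul ((m.factorial : ℝ))⁻¹
  rw [mul_zero] at h3
  refine h3.congr' ?_
  filter_upwards [eventually_ge_atTop m] with J hJ
  have hmJ : m ≤ J + 1 := le_trans hJ (Nat.le_succ J)
  have hfac : Nat.choose (J+1) m * m.factorial * (J + 1 - m).factorial = (J+1).factorial :=
    Nat.choose_mul_factorial_mul_factorial hmJ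
  have hfacR : ((Nat.choose (J+1) m : ℝ)) * (m.factorial : ℝ) * ((J + 1 - m).factorial : ℝ)
      = (((J+1).factorial : ℝ)) := by exact_mod_cast congrArg (Nat.cast : ℕ → ℝ) hfac
  have hm0 : (m.factorial : ℝ) ≠ 0 := Nat.cast_ne_zero.2 m.factorial_ne_zero
  have ht0 : (((J + 1 - m).factorial : ℝ)) ≠ 0 := Nat.cast_ne_zero.2 (J + 1 - m).factorial_ne_zero
  rw [← hfacR]
  have hc0 : ((Nat.choose (J+1) m : ℝ)) ≠ 0 :=
    Nat.cast_ne_zero.2 (Nat.choose_pos hmJ).ne'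
  field_simp

/-- Multivariate method of moments for Poisson limits: if the ℕ-valued random
variables `X n i` have all joint factorial moments
`E[Π_{i=1}^d (X[n,i])_{k_i}] → 1` as `n → ∞`, then for each fixed `d` the vector
`(X[n,1], …, X[n,d])` converges in distribution to `d` independent Poisson
random variables with mean 1. -/
theorem method_of_moments_poisson {Ω : Type*} [MeasurableSpace Ω]
    (μ : Measure Ω) [IsProbabilityMeasure μ]
    (X : ℕ → ℕ → Ω → ℕ) (hmeas : ∀ n i, Measurable (X n i))
    (hmom : ∀ d : ℕ, 1 ≤ d → ∀ k : ℕ → ℕ,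
      Tendsto (fun n : ℕ =>
          ∫ ω, ∏ i ∈ Finset.Icc 1 d,
            (descPochhammer ℝ (k i)).eval ((X n i ω : ℕ) : ℝ) ∂μ)
        atTop (nhds 1)) :
    ∀ d : ℕ, 1 ≤ d → ∀ m : ℕ → ℕ,
      Tendsto (fun n : ℕ =>
          (μ {ω | ∀ i ∈ Finset.Icc 1 d, X n i ω = m i}).toReal)
        atTop (nhds (∏ i ∈ Finset.Icc 1 d,
          Real.exp (-1) / (Nat.factorial (m i) : ℝ))) := by
  intro d hd m
  classical
  have hb := binMoments μ X hmom d hd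
  -- the probability as an integral of a product of indicators
  have hsmeas : ∀ n, MeasurableSet {ω | ∀ i ∈ Finset.Icc 1 d, X n i ω = m i} := by
    intro n
    have : {ω | ∀ i ∈ Finset.Icc 1 d, X n i ω = m i} = ⋂ i ∈ ((Finset.Icc 1 d : Finset ℕ) : Set ℕ), (X n i) ⁻¹' {m i} := by
      ext ω; simp
    rw [this]
    exact MeasurableSet.biInter (Set.to_countable _)
      (fun i _ => hmeas n i (measurableSet_singleton (m i)))
  have hindeq : ∀ n, (fun ω => ∏ i ∈ Finset.Icc 1 d, (if X n i ω = m i then (1:ℝ) else 0))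
      = Set.indicator {ω | ∀ i ∈ Finset.Icc 1 d, X n i ω = m i} (fun _ => (1:ℝ)) := by
    intro n
    funext ω
    rw [Finset.prod_boole, Set.indicator_apply]
    by_cases h : ∀ i ∈ Finset.Icc 1 d, X n i ω = m i <;> simp [h]
  have hPint : ∀ n, Integrable (fun ω => ∏ i ∈ Finset.Icc 1 d, (if X n i ω = m i then (1:ℝ) else 0)) μ := by
    intro n
    rw [hindeq n]
    exact (integrable_const (1:ℝ)).indicator (hsmeas n)
  have hPeq : ∀ n, (μ {ω | ∀ i ∈ Finset.Icc 1 d, X n i ω = m i}).toReal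
      = ∫ ω, ∏ i ∈ Finset.Icc 1 d, (if X n i ω = m i then (1:ℝ) else 0) ∂μ := by
    intro n
    rw [hindeq n, integral_indicator (hsmeas n)]
    simp [Measure.real]
  -- master instances for the main term and the error term
  have hT := fun J : ℕ => master μ X hmeas d hb
    (Fintype.piFinset (fun i : ↥(Finset.Icc 1 d) => Finset.Icc (m ↑i) J))
    (fun p => ∏ i : ↥(Finset.Icc 1 d), ((-1:ℝ)^(p i - m ↑i) * (Nat.choose (p i) (m ↑i) : ℝ)))
    (fun p => Kext (Finset.Icc 1 d) p)
  have hG := fun J : ℕ => master μ X hmeas d hb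
    ((Finset.Icc 1 d).sigma fun i => ((Finset.Icc 1 d).erase i).powerset)
    (fun q => (Nat.choose (J+1) (m q.1) : ℝ) * ∏ j ∈ q.2, (Nat.choose (J+1) (m j) : ℝ))
    (fun q => KG J q)
  -- limit of the main term as n → ∞
  have hTlim : ∀ J : ℕ, Tendsto (fun n => ∫ ω,
        ∑ p ∈ Fintype.piFinset (fun i : ↥(Finset.Icc 1 d) => Finset.Icc (m ↑i) J),
        (∏ i : ↥(Finset.Icc 1 d), ((-1:ℝ)^(p i - m ↑i) * (Nat.choose (p i) (m ↑i) : ℝ))) *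
        ∏ i ∈ Finset.Icc 1 d, ((X n i ω).choose (Kext (Finset.Icc 1 d) p i) : ℝ) ∂μ)
      atTop (nhds (∏ i ∈ Finset.Icc 1 d, ∑ j ∈ Finset.Icc (m i) J,
        ((-1:ℝ)^(j - m i) * (Nat.choose j (m i) : ℝ)) * ((j.factorial : ℝ))⁻¹)) := by
    intro J
    have h := (hT J).2
    beta_reduce at h
    rwa [← expandT (Finset.Icc 1 d) J m (fun i j => ((j.factorial : ℝ))⁻¹)] at h
  -- limit of the error term as n → ∞
  have hGlim : ∀ J : ℕ, Tendsto (fun n => ∫ ω,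
        ∑ q ∈ (Finset.Icc 1 d).sigma (fun i => ((Finset.Icc 1 d).erase i).powerset),
        ((Nat.choose (J+1) (m q.1) : ℝ) * ∏ j ∈ q.2, (Nat.choose (J+1) (m j) : ℝ)) *
        ∏ l ∈ Finset.Icc 1 d, ((X n l ω).choose (KG J q l) : ℝ) ∂μ)
      atTop (nhds (∑ i ∈ Finset.Icc 1 d,
        ((Nat.choose (J+1) (m i) : ℝ) * (((J+1).factorial : ℝ))⁻¹) *
        ∏ j ∈ (Finset.Icc 1 d).erase i,
          (1 + (Nat.choose (J+1) (m j) : ℝ) * (((J+1).factorial : ℝ))⁻¹))) := by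
    intro J
    have h := (hG J).2
    beta_reduce at h
    rwa [← expandG (Finset.Icc 1 d) J (fun i => (Nat.choose (J+1) (m i) : ℝ))
      (fun l j => ((j.factorial : ℝ))⁻¹) (fun l _ => by norm_num)] at h
  -- limit of α J as J → ∞
  have hαL : Tendsto (fun J : ℕ => ∏ i ∈ Finset.Icc 1 d, ∑ j ∈ Finset.Icc (m i) J,
      ((-1:ℝ)^(j - m i) * (Nat.choose j (m i) : ℝ)) * ((j.factorial : ℝ))⁻¹)
      atTop (nhds (∏ i ∈ Finset.Icc 1 d, Real.exp (-1) / ((m i).factorial : ℝ))) := by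
    refine tendsto_finset_prod _ fun i _ => ?_
    exact qlim (m i)
  -- limit of β J as J → ∞
  have hβ0 : Tendsto (fun J : ℕ => ∑ i ∈ Finset.Icc 1 d,
      ((Nat.choose (J+1) (m i) : ℝ) * (((J+1).factorial : ℝ))⁻¹) *
      ∏ j ∈ (Finset.Icc 1 d).erase i,
        (1 + (Nat.choose (J+1) (m j) : ℝ) * (((J+1).factorial : ℝ))⁻¹))
      atTop (nhds 0) := by
    have hpt : ∀ i ∈ Finset.Icc 1 d, Tendsto (fun J : ℕ =>
        ((Nat.choose (J+1) (m i) : ℝ) * (((J+1).factorial : ℝ))⁻¹) *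
        ∏ j ∈ (Finset.Icc 1 d).erase i,
          (1 + (Nat.choose (J+1) (m j) : ℝ) * (((J+1).factorial : ℝ))⁻¹))
        atTop (nhds 0) := by
      intro i _
      have h1 := czero (m i)
      have h2 : Tendsto (fun J : ℕ => ∏ j ∈ (Finset.Icc 1 d).erase i,
          (1 + (Nat.choose (J+1) (m j) : ℝ) * (((J+1).factorial : ℝ))⁻¹)) atTop
          (nhds (∏ j ∈ (Finset.Icc 1 d).erase i, (1:ℝ))) := by
        refine tendsto_finset_prod _ fun j _ => ?_
        have h3 := (czero (m j)).const_add (1:ℝ)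
        rwa [add_zero] at h3
      rw [Finset.prod_const_one] at h2
      have h4 := h1.mul h2
      rwa [zero_mul] at h4
    have hsum := tendsto_finset_sum (Finset.Icc 1 d) hpt
    rwa [Finset.sum_const_zero] at hsum
  -- for fixed large J, eventual bound in n
  have hbound : ∀ J : ℕ, (∀ i ∈ Finset.Icc 1 d, m i ≤ J) → ∀ᶠ n in atTop,
      |(μ {ω | ∀ i ∈ Finset.Icc 1 d, X n i ω = m i}).toReal -
        ∫ ω, ∑ p ∈ Fintype.piFinset (fun i : ↥(Finset.Icc 1 d) => Finset.Icc (m ↑i) J),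
          (∏ i : ↥(Finset.Icc 1 d), ((-1:ℝ)^(p i - m ↑i) * (Nat.choose (p i) (m ↑i) : ℝ))) *
          ∏ i ∈ Finset.Icc 1 d, ((X n i ω).choose (Kext (Finset.Icc 1 d) p i) : ℝ) ∂μ|
      ≤ ∫ ω, ∑ q ∈ (Finset.Icc 1 d).sigma (fun i => ((Finset.Icc 1 d).erase i).powerset),
          ((Nat.choose (J+1) (m q.1) : ℝ) * ∏ j ∈ q.2, (Nat.choose (J+1) (m j) : ℝ)) *
          ∏ l ∈ Finset.Icc 1 d, ((X n l ω).choose (KG J q l) : ℝ) ∂μ := by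
    intro J hJm
    filter_upwards [(hT J).1, (hG J).1] with n hTn hGn
    have hTn1 := hTn.1
    have hGn1 := hGn.1
    beta_reduce at hTn1 hGn1
    have hTeq : (fun ω => ∑ p ∈ Fintype.piFinset (fun i : ↥(Finset.Icc 1 d) => Finset.Icc (m ↑i) J),
          (∏ i : ↥(Finset.Icc 1 d), ((-1:ℝ)^(p i - m ↑i) * (Nat.choose (p i) (m ↑i) : ℝ))) *
          ∏ i ∈ Finset.Icc 1 d, ((X n i ω).choose (Kext (Finset.Icc 1 d) p i) : ℝ))
        = fun ω => ∏ i ∈ Finset.Icc 1 d, ∑ j ∈ Finset.Icc (m i) J,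
          ((-1:ℝ)^(j - m i) * (Nat.choose j (m i) : ℝ)) * ((X n i ω).choose j : ℝ) :=
      funext fun ω => (expandT (Finset.Icc 1 d) J m (fun i j => ((X n i ω).choose j : ℝ))).symm
    have hGeq : (fun ω => ∑ q ∈ (Finset.Icc 1 d).sigma (fun i => ((Finset.Icc 1 d).erase i).powerset),
          ((Nat.choose (J+1) (m q.1) : ℝ) * ∏ j ∈ q.2, (Nat.choose (J+1) (m j) : ℝ)) *
          ∏ l ∈ Finset.Icc 1 d, ((X n l ω).choose (KG J q l) : ℝ))
        = fun ω => ∑ i ∈ Finset.Icc 1 d,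
          ((Nat.choose (J+1) (m i) : ℝ) * ((X n i ω).choose (J+1) : ℝ)) *
          ∏ j ∈ (Finset.Icc 1 d).erase i,
            (1 + (Nat.choose (J+1) (m j) : ℝ) * ((X n j ω).choose (J+1) : ℝ)) :=
      funext fun ω => (expandG (Finset.Icc 1 d) J (fun i => (Nat.choose (J+1) (m i) : ℝ))
        (fun l j => ((X n l ω).choose j : ℝ)) (fun l _ => by norm_num)).symm
    rw [hPeq n, hTeq, hGeq]
    rw [hTeq] at hTn1
    rw [hGeq] at hGn1
    -- pointwise bound
    have hkey : ∀ ω, |(∏ i ∈ Finset.Icc 1 d, (if X n i ω = m i then (1:ℝ) else 0)) -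
        ∏ i ∈ Finset.Icc 1 d, ∑ j ∈ Finset.Icc (m i) J,
          ((-1:ℝ)^(j - m i) * (Nat.choose j (m i) : ℝ)) * ((X n i ω).choose j : ℝ)|
        ≤ ∑ i ∈ Finset.Icc 1 d,
          ((Nat.choose (J+1) (m i) : ℝ) * ((X n i ω).choose (J+1) : ℝ)) *
          ∏ j ∈ (Finset.Icc 1 d).erase i,
            (1 + (Nat.choose (J+1) (m j) : ℝ) * ((X n j ω).choose (J+1) : ℝ)) := by
      intro ω
      have he0 : ∀ i, (0:ℝ) ≤ (Nat.choose (J+1) (m i) : ℝ) * ((X n i ω).choose (J+1) : ℝ) :=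
        fun i => by positivity
      have habs : ∀ i ∈ Finset.Icc 1 d,
          |(if X n i ω = m i then (1:ℝ) else 0) - ∑ j ∈ Finset.Icc (m i) J,
            ((-1:ℝ)^(j - m i) * (Nat.choose j (m i) : ℝ)) * ((X n i ω).choose j : ℝ)|
          ≤ (Nat.choose (J+1) (m i) : ℝ) * ((X n i ω).choose (J+1) : ℝ) := by
        intro i hi
        exact stepA (X n i ω) (m i) J (hJm i hi)
      have hind : ∀ i, |(if X n i ω = m i then (1:ℝ) else 0)|
          ≤ 1 + (Nat.choose (J+1) (m i) : ℝ) * ((X n i ω).choose (J+1) : ℝ) := by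
        intro i
        have h0 := he0 i
        by_cases h : X n i ω = m i
        · rw [if_pos h, abs_one]; linarith
        · rw [if_neg h, abs_zero]; linarith
      refine prod_diff (Finset.Icc 1 d) _ _
        (fun i => 1 + (Nat.choose (J+1) (m i) : ℝ) * ((X n i ω).choose (J+1) : ℝ))
        (fun i => (Nat.choose (J+1) (m i) : ℝ) * ((X n i ω).choose (J+1) : ℝ))
        (fun i _ => hind i) ?_ habs (fun i _ => he0 i)
      intro i hi
      have h1 := habs i hi
      have h2 := hind i
      set a := (if X n i ω = m i then (1:ℝ) else 0)
      set b := ∑ j ∈ Finset.Icc (m i) J,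
        ((-1:ℝ)^(j - m i) * (Nat.choose j (m i) : ℝ)) * ((X n i ω).choose j : ℝ)
      have h3 := abs_sub a (a - b)
      rw [sub_sub_cancel] at h3
      have ha1 : |a| ≤ 1 := by
        by_cases h : X n i ω = m i
        · rw [show a = if X n i ω = m i then (1:ℝ) else 0 from rfl, if_pos h, abs_one]
        · rw [show a = if X n i ω = m i then (1:ℝ) else 0 from rfl, if_neg h, abs_zero]
          linarith
      beta_reduce
      linarith
    have hdiffint : Integrable (fun ω =>
        (∏ i ∈ Finset.Icc 1 d, (if X n i ω = m i then (1:ℝ) else 0)) -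
        ∏ i ∈ Finset.Icc 1 d, ∑ j ∈ Finset.Icc (m i) J,
          ((-1:ℝ)^(j - m i) * (Nat.choose j (m i) : ℝ)) * ((X n i ω).choose j : ℝ)) μ :=
      (hPint n).sub hTn1
    rw [← integral_sub (hPint n) hTn1]
    refine le_trans ?_ (integral_mono hdiffint.abs hGn1 (fun ω => hkey ω))
    have hni := norm_integral_le_integral_norm (μ := μ) (fun ω =>
        (∏ i ∈ Finset.Icc 1 d, (if X n i ω = m i then (1:ℝ) else 0)) -
        ∏ i ∈ Finset.Icc 1 d, ∑ j ∈ Finset.Icc (m i) J,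
          ((-1:ℝ)^(j - m i) * (Nat.choose j (m i) : ℝ)) * ((X n i ω).choose j : ℝ))
    simpa [Real.norm_eq_abs] using hni
  refine assemble ?_ hTlim hGlim hαL hβ0
  exact ((Finset.eventually_all (Finset.Icc 1 d)).2 fun i _ => eventually_ge_atTop (m i)).mono
    (fun J hJ => hbound J hJ)
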